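/- arXiv:hep-th/9309118 — 4 statements merged into one kernel-verified Lean document; each statement's English description precedes it below -/
import Mathlib

section
/- Let n, N be positive integers, and suppose ϑ satisfies the transformation law ϑ(x₁,…,xₙ|z₁,…,z_jτ⁴,…,z_N) = ϑ(x₁,…,xₙ|z₁,…,z_N)·∏_{μ=1}^n (−z_jτ/x_μ). Then for every j ∈ {1,…,N} and all x ∈ (ℂ∖{0})ⁿ, z ∈ (ℂ∖{0})^N such that no ratio x_μ/z_i (1 ≤ μ ≤ n, 1 ≤ i ≤ N) is an odd integer power of q, one has Ψ(x₁,…,xₙ|z₁,…,z_jτ⁴,…,z_N) = Ψ(x₁,…,xₙ|z₁,…,z_N) · ∏_{μ=1}^n (x_μ − z_jτ)/(x_μ − z_jτ³). -/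
open Finset Function

noncomputable section

/-- The infinite product `(z;p)_∞ = ∏_{k≥0} (1 - z p^k)`. -/
def pochInf (z p : ℂ) : ℂ := ∏' k : ℕ, (1 - z * p ^ k)

/-- `ψ(z) = 1/((zq;q⁴)_∞ (z⁻¹q;q⁴)_∞)`. -/
def psiF (q z : ℂ) : ℂ := 1 / (pochInf (z * q) (q ^ 4) * pochInf (z⁻¹ * q) (q ^ 4))

/-- The kernel `Ψ(x₁,…,xₙ|z₁,…,z_N) = ϑ(x|z)·∏_{μ,j} ψ(x_μ/z_j)`. -/
def kerPsi (q : ℂ) {n N : ℕ} (θ : (Fin n → ℂ) → (Fin N → ℂ) → ℂ)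
    (x : Fin n → ℂ) (z : Fin N → ℂ) : ℂ :=
  θ x z * ∏ μ : Fin n, ∏ j : Fin N, psiF q (x μ / z j)

/-- One-variable kernel `Ψ(x|z₁,…,z_N) = ϑ(x|z)·∏_j ψ(x/z_j)`. -/
def kerPsi1 (q : ℂ) {N : ℕ} (θ : ℂ → (Fin N → ℂ) → ℂ) (x : ℂ) (z : Fin N → ℂ) : ℂ :=
  θ x z * ∏ j : Fin N, psiF q (x / z j)

/-- Elementary symmetric polynomial `σ_κ(a₁,…,a_m)`. -/
def esym {m : ℕ} (a : Fin m → ℂ) (κ : ℕ) : ℂ :=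
  ∑ s ∈ Finset.powersetCard κ (Finset.univ : Finset (Fin m)), ∏ i ∈ s, a i

/-- Complete homogeneous symmetric polynomial `σ̃_κ(a₁,…,a_m)`. -/
def hsym {m : ℕ} (a : Fin m → ℂ) (κ : ℕ) : ℂ :=
  ∑ μ ∈ (Finset.univ : Finset (Fin m)).sym κ, (Multiset.map a (μ : Multiset (Fin m))).prod

/-- `h^{(m)}(x|z) = x⁻¹(∏_j (x - z_jτ) - τ^{2m} ∏_j (x - z_jτ⁻¹))` as a polynomial in `x`
(the bracket vanishes at `x = 0`, so division is exact). -/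
def hN (τ : ℂ) {m : ℕ} (z : Fin m → ℂ) : Polynomial ℂ :=
  ((∏ j : Fin m, (Polynomial.X - Polynomial.C (z j * τ)))
      - Polynomial.C (τ ^ (2 * m)) * ∏ j : Fin m, (Polynomial.X - Polynomial.C (z j * τ⁻¹)))
    /ₘ Polynomial.X

/-- `φ^{(nl)}_{λκ}(a|b)`. -/
def phiP (τ : ℂ) {n l : ℕ} (lam κ : ℕ) (a : Fin n → ℂ) (b : Fin l → ℂ) : ℂ :=
  esym b κ - ∑ β ∈ Finset.Icc lam κ, ∑ α ∈ Finset.Icc lam β,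
    (-1 : ℂ) ^ (β - α) * τ ^ (2 * β) * esym b (κ - β) * esym a α * hsym a (β - α)

/-- `f^{(nl)}_λ(x|a|b) = Σ_{κ=0}^{l−n+λ−2} (1 − τ^{2(l−n+λ−1−κ)})(−τ)^κ φ^{(nl)}_{λκ}(a|b)
x^{l−n+λ−2−κ}` (empty sum if `l−n+λ−2 < 0`). -/
def fP (τ : ℂ) {n l : ℕ} (lam : ℕ) (x : ℂ) (a : Fin n → ℂ) (b : Fin l → ℂ) : ℂ :=
  ∑ κ ∈ Finset.range ((l : ℤ) - n + lam - 1).toNat,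
    (1 - τ ^ (2 * (((l : ℤ) - n + lam - 1).toNat - κ))) * (-τ) ^ κ * phiP τ lam κ a b
      * x ^ (((l : ℤ) - n + lam - 1).toNat - 1 - κ)

/-- `g^{(n)}_λ(x|a) = Σ_{κ=0}^{λ−2} (1 − τ^{2(λ−1−κ)})(−τ)^κ σ_κ(a) x^{λ−2−κ}`. -/
def gP (τ : ℂ) {n : ℕ} (lam : ℕ) (x : ℂ) (a : Fin n → ℂ) : ℂ :=
  ∑ κ ∈ Finset.range (lam - 1),
    (1 - τ ^ (2 * (lam - 1 - κ))) * (-τ) ^ κ * esym a κ * x ^ (lam - 2 - κ)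

/-- `A^{(nl)}_λ(x|a|b)`. -/
def AP (τ : ℂ) {n l : ℕ} (lam : ℕ) (x : ℂ) (a : Fin n → ℂ) (b : Fin l → ℂ) : ℂ :=
  (∏ j : Fin n, (x - a j * τ)) * fP τ lam x a b
    + τ ^ (2 * (l - n + lam - 1)) * (∏ i : Fin l, (x - b i * τ⁻¹)) * gP τ lam x a

/-- `Δ^{(nl)}(x₁,…,xₙ|a|b) = det(A^{(nl)}_λ(x_μ|a|b))_{1 ≤ λ,μ ≤ n}`. -/
def DeltaP (τ : ℂ) {n l : ℕ} (x : Fin n → ℂ) (a : Fin n → ℂ) (b : Fin l → ℂ) : ℂ :=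
  Matrix.det (Matrix.of fun lam μ : Fin n => AP τ ((lam : ℕ) + 1) (x μ) a b)

/-- The explicit `Δ(x|z₁|b₁,…,b_m)` of the case `n = 1` (here `m = N − 1`):
`(x−z₁τ)·Σ_{κ=0}^{N−3}(1−τ^{2(N−2−κ)})(−τ)^κ x^{N−3−κ} Σ_{λ=0}^{κ}(−z₁τ²)^λ σ_{κ−λ}(b)`. -/
def Delta1 (τ : ℂ) {m : ℕ} (x z1 : ℂ) (b : Fin m → ℂ) : ℂ :=
  (x - z1 * τ) * ∑ κ ∈ Finset.range (m - 1),
    (1 - τ ^ (2 * (m - 1 - κ))) * (-τ) ^ κ * x ^ (m - 2 - κ) *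
      ∑ lam ∈ Finset.range (κ + 1), (-(z1 * τ ^ 2)) ^ lam * esym b (κ - lam)

/-- Iterated contour integral over `n` copies of the anticlockwise circle `|x| = ρ`. -/
def multiCircle : (n : ℕ) → ((Fin n → ℂ) → ℂ) → ℝ → ℂ
  | 0, f, _ => f (fun i => i.elim0)
  | n + 1, f, ρ => ∮ t in C(0, ρ), multiCircle n (fun x => f (Fin.cons t x)) ρ

/-- `H(a|b) = ∮⋯∮ F(x|a,b) Ψ(x|a,b) dx₁⋯dxₙ` with
`F = Δ^{(nl)}(x|a|b)/∏_{j,i}(b_i − a_jτ²)`. -/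
def Hfun (q τ : ℂ) {n l : ℕ} (θ : (Fin n → ℂ) → (Fin (n + l) → ℂ) → ℂ)
    (a : Fin n → ℂ) (b : Fin l → ℂ) (ρ : ℝ) : ℂ :=
  multiCircle n (fun x =>
    (DeltaP τ x a b / ∏ j : Fin n, ∏ i : Fin l, (b i - a j * τ ^ 2)) *
      kerPsi q θ x (Fin.append a b)) ρ

/-- The radius `ρ` separates the poles: `max_i |w_i q| < ρ < min_i |w_i q⁻¹|`
for the tuple `w = (a, b)`. -/
def admissible (q : ℂ) {n l : ℕ} (a : Fin n → ℂ) (b : Fin l → ℂ) (ρ : ℝ) : Prop :=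
  (∀ j, ‖a j * q‖ < ρ) ∧ (∀ j, ρ < ‖a j * q⁻¹‖) ∧
  (∀ i, ‖b i * q‖ < ρ) ∧ (∀ i, ρ < ‖b i * q⁻¹‖)

/-- The denominator of `F` does not vanish: `w_i − w_jτ² ≠ 0` for `1 ≤ j ≤ n < i ≤ N`. -/
def regularF (τ : ℂ) {n l : ℕ} (a : Fin n → ℂ) (b : Fin l → ℂ) : Prop :=
  ∀ (j : Fin n) (i : Fin l), b i - a j * τ ^ 2 ≠ 0

end


noncomputable section
open Complex

lemma summable_log_aux (z p : ℂ) (hp : ‖p‖ < 1) :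
    Summable fun k : ℕ => Complex.log (1 - z * p ^ k) := by
  have hgeo : Summable fun k : ℕ => (3/2 : ℝ) * (‖z‖ * ‖p‖ ^ k) :=
    ((summable_geometric_of_lt_one (norm_nonneg p) hp).mul_left _).mul_left _
  refine Summable.of_norm_bounded_eventually hgeo ?_
  rw [Nat.cofinite_eq_atTop]
  have h0 : Filter.Tendsto (fun k : ℕ => ‖z‖ * ‖p‖ ^ k) Filter.atTop (nhds 0) := by
    simpa using (tendsto_pow_atTop_nhds_zero_of_lt_one (norm_nonneg p) hp).const_mul ‖z‖
  filter_upwards [h0.eventually_le_const (by norm_num : (0:ℝ) < 1/2)] with k hk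
  have habs : ‖-(z * p ^ k)‖ ≤ 1/2 := by
    rw [norm_neg, norm_mul, norm_pow]; exact hk
  calc ‖Complex.log (1 - z * p ^ k)‖ = ‖Complex.log (1 + -(z * p ^ k))‖ := by rw [sub_eq_add_neg]
    _ ≤ 3/2 * ‖-(z * p ^ k)‖ := Complex.norm_log_one_add_half_le_self habs
    _ = 3/2 * (‖z‖ * ‖p‖ ^ k) := by
        rw [norm_neg, norm_mul, norm_pow]

lemma hasProd_aux (z p : ℂ) (hp : ‖p‖ < 1) (h : ∀ k : ℕ, 1 - z * p ^ k ≠ 0) :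
    HasProd (fun k : ℕ => 1 - z * p ^ k)
      (Complex.exp (∑' k : ℕ, Complex.log (1 - z * p ^ k))) := by
  have := ((summable_log_aux z p hp).hasSum).cexp
  exact this.congr_fun fun k => (Complex.exp_log (h k)).symm

lemma pochInf_ne_zero (z p : ℂ) (hp : ‖p‖ < 1) (h : ∀ k : ℕ, 1 - z * p ^ k ≠ 0) :
    pochInf z p ≠ 0 := by
  rw [pochInf, (hasProd_aux z p hp h).tprod_eq]
  exact Complex.exp_ne_zero _

lemma pochInf_shift (z p : ℂ) (hp : ‖p‖ < 1) (h : ∀ k : ℕ, 1 - z * p ^ k ≠ 0) :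
    pochInf z p = (1 - z) * pochInf (z * p) p := by
  have h' : ∀ k : ℕ, 1 - z * p * p ^ k ≠ 0 := fun k => by
    have := h (k + 1); rw [pow_succ] at this
    intro hc; exact this (by linear_combination hc)
  have hm : Multipliable (fun k : ℕ => (fun j : ℕ => 1 - z * p ^ j) (k + 1)) :=
    (hasProd_aux (z * p) p hp h').multipliable.congr fun k => by
      simp only []; rw [pow_succ]; ring
  have h1 := tprod_eq_zero_mul' (f := fun k : ℕ => 1 - z * p ^ k) hm
  simp only [pow_zero, mul_one] at h1
  rw [pochInf, h1]
  congr 1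
  rw [pochInf]
  exact tprod_congr fun k => by rw [pow_succ]; ring

lemma factor_ne {q u : ℂ} (hodd : ∀ m : ℤ, Odd m → u ≠ q ^ m)
    {m : ℤ} (hm : Odd m) : 1 - u * q ^ m ≠ 0 := by
  intro h
  have h1 : u * q ^ m = 1 := by linear_combination -h
  exact hodd (-m) hm.neg (by rw [zpow_neg]; exact eq_inv_of_mul_eq_one_left h1)

lemma factor_ne' {q u : ℂ} (hu : u ≠ 0) (hodd : ∀ m : ℤ, Odd m → u ≠ q ^ m)
    {m : ℤ} (hm : Odd m) : 1 - u⁻¹ * q ^ m ≠ 0 := by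
  intro h
  have h1 : u⁻¹ * q ^ m = 1 := by linear_combination -h
  apply hodd m hm
  field_simp at h1
  exact h1.symm


lemma psi_step (q : ℂ) (hq : q ≠ 0) (hq1 : ‖q‖ < 1) (u : ℂ)
    (hu : u ≠ 0) (hodd : ∀ m : ℤ, Odd m → u ≠ q ^ m) :
    psiF q (u * q ^ 4) * (-q⁻¹ * u⁻¹) = psiF q u * ((u - q⁻¹) / (u - (q⁻¹) ^ 3)) := by
  have hp : ‖q ^ 4‖ < 1 := by
    rw [norm_pow]; exact pow_lt_one₀ (norm_nonneg q) hq1 (by norm_num)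
  have key : ∀ m : ℤ, Odd m → 1 - u * q ^ m ≠ 0 := fun m hm => factor_ne hodd hm
  have key' : ∀ m : ℤ, Odd m → 1 - u⁻¹ * q ^ m ≠ 0 := fun m hm => factor_ne' hu hodd hm
  have epow : ∀ k : ℕ, (q ^ 4) ^ k = q ^ ((4 * k : ℤ)) := fun k => by
    rw [show ((4 * k : ℤ)) = ((4 * k : ℕ) : ℤ) by push_cast; ring, zpow_natCast, pow_mul]
  have hA : ∀ k : ℕ, 1 - u * q * (q ^ 4) ^ k ≠ 0 := fun k => by
    have h := key (1 + 4 * k) ⟨2 * k, by ring⟩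
    intro hc; apply h
    rw [show ((1 : ℤ) + 4 * k) = 1 + (4 * k : ℤ) by ring, zpow_add₀ hq, zpow_one, ← epow]
    linear_combination hc
  have hA' : ∀ k : ℕ, 1 - u * q * q ^ 4 * (q ^ 4) ^ k ≠ 0 := fun k => by
    have h := key (5 + 4 * k) ⟨2 * k + 2, by ring⟩
    intro hc; apply h
    rw [show ((5 : ℤ) + 4 * k) = 1 + 4 + (4 * k : ℤ) by ring, zpow_add₀ hq, zpow_add₀ hq,
      zpow_one, ← epow, show ((4 : ℤ)) = ((4 : ℕ) : ℤ) by norm_num, zpow_natCast]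
    linear_combination hc
  have hB : ∀ k : ℕ, 1 - u⁻¹ * q * (q ^ 4) ^ k ≠ 0 := fun k => by
    have h := key' (1 + 4 * k) ⟨2 * k, by ring⟩
    intro hc; apply h
    rw [show ((1 : ℤ) + 4 * k) = 1 + (4 * k : ℤ) by ring, zpow_add₀ hq, zpow_one, ← epow]
    linear_combination hc
  have hC : ∀ k : ℕ, 1 - u⁻¹ * (q⁻¹) ^ 3 * (q ^ 4) ^ k ≠ 0 := fun k => by
    have h := key' (4 * k - 3) ⟨2 * k - 2, by ring⟩
    intro hc; apply h
    rw [show ((4 * k - 3 : ℤ)) = (4 * k : ℤ) + (-3) by ring, zpow_add₀ hq, ← epow,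
      show ((-3 : ℤ)) = -((3 : ℕ) : ℤ) by norm_num, zpow_neg, zpow_natCast, ← inv_pow]
    linear_combination hc
  have shift1 : pochInf (u * q) (q ^ 4) = (1 - u * q) * pochInf (u * q * q ^ 4) (q ^ 4) :=
    pochInf_shift _ _ hp hA
  have shift2 : pochInf (u⁻¹ * q⁻¹ ^ 3) (q ^ 4)
      = (1 - u⁻¹ * q⁻¹ ^ 3) * pochInf (u⁻¹ * q⁻¹ ^ 3 * q ^ 4) (q ^ 4) :=
    pochInf_shift _ _ hp hC
  have r3 : u⁻¹ * q⁻¹ ^ 3 * q ^ 4 = u⁻¹ * q := by field_simp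
  have nA' : pochInf (u * q * q ^ 4) (q ^ 4) ≠ 0 := pochInf_ne_zero _ _ hp hA'
  have nB : pochInf (u⁻¹ * q) (q ^ 4) ≠ 0 := pochInf_ne_zero _ _ hp hB
  have s1 : 1 - u * q ≠ 0 := by simpa using hA 0
  have s2 : 1 - u⁻¹ * q⁻¹ ^ 3 ≠ 0 := by simpa using hC 0
  have s3 : u - q⁻¹ ^ 3 ≠ 0 := by
    have e : u - q⁻¹ ^ 3 = u * (1 - u⁻¹ * q⁻¹ ^ 3) := by field_simp
    rw [e]; exact mul_ne_zero hu s2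
  rw [psiF, psiF, show u * q ^ 4 * q = u * q * q ^ 4 by ring,
    show (u * q ^ 4)⁻¹ * q = u⁻¹ * q⁻¹ ^ 3 by rw [mul_inv, inv_pow]; field_simp,
    shift1, shift2, r3]
  have s2' : u * q ^ 3 - 1 ≠ 0 := by
    intro h; apply s2
    have e2 : 1 - u⁻¹ * q⁻¹ ^ 3 = (u * q ^ 3 - 1) * (u * q ^ 3)⁻¹ := by field_simp
    rw [e2, h, zero_mul]
  set P1 := pochInf (u * q * q ^ 4) (q ^ 4)
  set P2 := pochInf (u⁻¹ * q) (q ^ 4)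
  field_simp [s1, s2, s2', s3]
  ring

end

/-- quasi-periodicity of the kernel `Ψ` in a variable `z_j`. -/
theorem stmt_0 (q : ℂ) (hq0 : 0 < ‖q‖) (hq1 : ‖q‖ < 1)
    (τ : ℂ) (hτ : τ = q⁻¹) (n N : ℕ) (hn : 0 < n) (hN : 0 < N)
    (θ : (Fin n → ℂ) → (Fin N → ℂ) → ℂ)
    (hθ : ∀ (x : Fin n → ℂ) (z : Fin N → ℂ) (j : Fin N),
      θ x (Function.update z j (z j * τ ^ 4))
        = θ x z * ∏ μ, (-(z j) * τ / x μ))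
    (j : Fin N) (x : Fin n → ℂ) (z : Fin N → ℂ)
    (hx : ∀ μ, x μ ≠ 0) (hz : ∀ i, z i ≠ 0)
    (hreg : ∀ (μ : Fin n) (i : Fin N) (m : ℤ), Odd m → x μ / z i ≠ q ^ m) :
    kerPsi q θ x (Function.update z j (z j * τ ^ 4))
      = kerPsi q θ x z * ∏ μ, (x μ - z j * τ) / (x μ - z j * τ ^ 3) := by
  subst hτ
  have hq : q ≠ 0 := by
    intro h; rw [h] at hq0; simp at hq0
  have hzj := hz j
  have key : ∀ μ : Fin n,
      (-(z j) * q⁻¹ / x μ) * psiF q (x μ / (z j * q⁻¹ ^ 4))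
        = psiF q (x μ / z j) * ((x μ - z j * q⁻¹) / (x μ - z j * q⁻¹ ^ 3)) := by
    intro μ
    have hxμ := hx μ
    have hu : x μ / z j ≠ 0 := div_ne_zero hxμ hzj
    have step := psi_step q hq hq1 (x μ / z j) hu (fun m hm => hreg μ j m hm)
    have eA : x μ / (z j * q⁻¹ ^ 4) = (x μ / z j) * q ^ 4 := by
      field_simp
    have eB : -(z j) * q⁻¹ / x μ = -q⁻¹ * (x μ / z j)⁻¹ := by
      field_simp
      try ring
    have eC : (x μ - z j * q⁻¹) / (x μ - z j * q⁻¹ ^ 3)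
        = ((x μ / z j) - q⁻¹) / ((x μ / z j) - q⁻¹ ^ 3) := by
      rw [show x μ - z j * q⁻¹ = z j * (x μ / z j - q⁻¹) by field_simp; try ring,
        show x μ - z j * q⁻¹ ^ 3 = z j * (x μ / z j - q⁻¹ ^ 3) by field_simp; try ring,
        mul_div_mul_left _ _ hzj]
    rw [eA, eB, eC, mul_comm]
    exact step
  have hsplit : ∀ μ : Fin n,
      (∏ i, psiF q (x μ / Function.update z j (z j * q⁻¹ ^ 4) i))
        = psiF q (x μ / (z j * q⁻¹ ^ 4)) * ∏ i ∈ Finset.univ.erase j, psiF q (x μ / z i) := by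
    intro μ
    rw [← Finset.mul_prod_erase Finset.univ _ (Finset.mem_univ j)]
    congr 1
    · rw [Function.update_self]
    · exact Finset.prod_congr rfl fun i hi => by
        rw [Function.update_of_ne (Finset.ne_of_mem_erase hi)]
  have hfull : ∀ μ : Fin n,
      (∏ i, psiF q (x μ / z i))
        = psiF q (x μ / z j) * ∏ i ∈ Finset.univ.erase j, psiF q (x μ / z i) :=
    fun μ => (Finset.mul_prod_erase Finset.univ _ (Finset.mem_univ j)).symm
  unfold kerPsi
  rw [hθ x z j, mul_assoc, mul_assoc, ← Finset.prod_mul_distrib, ← Finset.prod_mul_distrib]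
  congr 1
  refine Finset.prod_congr rfl fun μ _ => ?_
  rw [hsplit μ, hfull μ]
  have kμ := key μ
  linear_combination (∏ i ∈ Finset.univ.erase j, psiF q (x μ / z i)) * kμ
end

section
/- Let n, N be positive integers, and suppose ϑ satisfies the transformation law ϑ(x₁,…,x_μτ⁴,…,xₙ|z₁,…,z_N) = ϑ(x₁,…,xₙ|z₁,…,z_N)·∏_{j=1}^N (−x_μτ/z_j). Then for every μ ∈ {1,…,n} and all x ∈ (ℂ∖{0})ⁿ, z ∈ (ℂ∖{0})^N such that no ratio x_ν/z_j is an odd integer power of q, one has Ψ(x₁,…,x_μτ⁴,…,xₙ|z₁,…,z_N) = τ^{−2N} · ∏_{j=1}^N (x_μ − z_jτ⁻¹)/(x_μ − z_jτ⁻³) · Ψ(x₁,…,xₙ|z₁,…,z_N). -/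
open Finset Function

section auxlemmas

lemma multipliable_one_sub (w p : ℂ) (hp : ‖p‖ < 1) :
    Multipliable (fun k : ℕ => 1 - w * p ^ k) := by
  by_cases h : ∃ k, 1 - w * p ^ k = 0
  · obtain ⟨k, hk⟩ := h
    refine ⟨0, ?_⟩
    have hev : (fun s : Finset ℕ => ∏ i ∈ s, (1 - w * p ^ i)) =ᶠ[Filter.atTop]
        (fun _ => (0 : ℂ)) := by
      filter_upwards [Filter.eventually_ge_atTop ({k} : Finset ℕ)] with s hs
      exact Finset.prod_eq_zero (hs (Finset.mem_singleton_self k)) hk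
    exact Filter.Tendsto.congr' hev.symm tendsto_const_nhds
  · push_neg at h
    have hgeom : Summable fun n : ℕ => (3/2 : ℝ) * (‖w‖ * ‖p‖ ^ n) :=
      ((summable_geometric_of_lt_one (norm_nonneg p) hp).mul_left ‖w‖).mul_left _
    have h0 : Filter.Tendsto (fun n : ℕ => ‖w‖ * ‖p‖ ^ n) Filter.atTop (nhds 0) := by
      simpa using (tendsto_pow_atTop_nhds_zero_of_lt_one (norm_nonneg p) hp).const_mul ‖w‖
    have hev : ∀ᶠ n in Filter.atTop, ‖w‖ * ‖p‖ ^ n ≤ 1/2 :=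
      h0.eventually (ge_mem_nhds (show (0:ℝ) < 1/2 by norm_num))
    have hsum : Summable fun n : ℕ => Complex.log (1 - w * p ^ n) := by
      apply Summable.of_norm_bounded_eventually_nat hgeom
      filter_upwards [hev] with n hn
      have hz : ‖-(w * p ^ n)‖ ≤ 1/2 := by
        simpa [norm_mul, norm_pow] using hn
      have hb := Complex.norm_log_one_add_half_le_self hz
      rw [show (1 : ℂ) - w * p ^ n = 1 + -(w * p ^ n) by ring]
      refine hb.trans (le_of_eq ?_)
      simp [norm_mul, norm_pow]
    exact Complex.multipliable_of_summable_log hsum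

set_option maxHeartbeats 1600000 in
lemma pochInf_step (w p : ℂ) (hp : ‖p‖ < 1) :
    pochInf w p = (1 - w) * pochInf (w * p) p := by
  have hm := multipliable_one_sub (w * p) p (by simpa using hp)
  have hm' : Multipliable (fun n : ℕ => 1 - w * p ^ (n + 1)) := by
    refine hm.congr fun k => ?_
    ring
  simp only [pochInf]
  rw [tprod_eq_zero_mul' hm']
  simp only [pow_zero, mul_one]
  congr 1
  exact tprod_congr fun k => by ring

lemma psiF_step (q : ℂ) (hq0 : q ≠ 0) (hq1 : ‖q‖ < 1) (y : ℂ) (hy : y ≠ 0)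
    (h1 : y ≠ q) (h3 : y ≠ q ^ 3) :
    psiF q (y * (q⁻¹) ^ 4) = ((1 - y⁻¹ * q) / (1 - y * (q ^ 3)⁻¹)) * psiF q y := by
  have hq4 : ‖q ^ 4‖ < 1 := by
    rw [norm_pow]
    exact pow_lt_one₀ (norm_nonneg q) hq1 (by norm_num)
  have e1 : y * (q⁻¹) ^ 4 * q = y * (q ^ 3)⁻¹ := by
    field_simp
  have e2 : (y * (q⁻¹) ^ 4)⁻¹ * q = y⁻¹ * q * q ^ 4 := by
    field_simp
  have e3 : y * (q ^ 3)⁻¹ * q ^ 4 = y * q := by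
    field_simp
  have A := pochInf_step (y * (q ^ 3)⁻¹) (q ^ 4) hq4
  rw [e3] at A
  have B := pochInf_step (y⁻¹ * q) (q ^ 4) hq4
  have hd : (1 : ℂ) - y * (q ^ 3)⁻¹ ≠ 0 := by
    intro h
    exact h3 ((mul_inv_eq_one₀ (pow_ne_zero 3 hq0)).mp (sub_eq_zero.mp h).symm)
  have he : (1 : ℂ) - y⁻¹ * q ≠ 0 := by
    intro h
    exact h1 ((inv_mul_eq_one₀ hy).mp (sub_eq_zero.mp h).symm)
  rw [psiF, psiF, e1, e2, A, B]
  set P1 := pochInf (y * q) (q ^ 4)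
  set P2 := pochInf (y⁻¹ * q * q ^ 4) (q ^ 4)
  by_cases hP1 : P1 = 0
  · simp [hP1]
  by_cases hP2 : P2 = 0
  · simp [hP2]
  field_simp [hd, he, sub_ne_zero.mpr h1, sub_ne_zero.mpr h3,
    sub_ne_zero.mpr (Ne.symm h1), sub_ne_zero.mpr (Ne.symm h3)]

end auxlemmas

theorem stmt_1' (q : ℂ) (hq0 : 0 < ‖q‖) (hq1 : ‖q‖ < 1)
    (τ : ℂ) (hτ : τ = q⁻¹) (n N : ℕ) (hn : 0 < n) (hN : 0 < N)
    (θ : (Fin n → ℂ) → (Fin N → ℂ) → ℂ)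
    (hθ : ∀ (x : Fin n → ℂ) (z : Fin N → ℂ) (μ : Fin n),
      θ (Function.update x μ (x μ * τ ^ 4)) z
        = θ x z * ∏ j, (-(x μ) * τ / z j))
    (μ : Fin n) (x : Fin n → ℂ) (z : Fin N → ℂ)
    (hx : ∀ ν, x ν ≠ 0) (hz : ∀ i, z i ≠ 0)
    (hreg : ∀ (ν : Fin n) (i : Fin N) (m : ℤ), Odd m → x ν / z i ≠ q ^ m) :
    kerPsi q θ (Function.update x μ (x μ * τ ^ 4)) z
      = (τ ^ (2 * N))⁻¹ * (∏ j, (x μ - z j / τ) / (x μ - z j / τ ^ 3)) *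
          kerPsi q θ x z := by
  subst hτ
  have hq : q ≠ 0 := by
    intro h
    rw [h] at hq0
    simp at hq0
  have h1 : ∀ (ν : Fin n) (j : Fin N), x ν / z j ≠ q := by
    intro ν j
    have := hreg ν j 1 ⟨0, by ring⟩
    simpa using this
  have h3 : ∀ (ν : Fin n) (j : Fin N), x ν / z j ≠ q ^ 3 := by
    intro ν j
    have := hreg ν j 3 ⟨1, by ring⟩
    rw [show (3 : ℤ) = ((3 : ℕ) : ℤ) from rfl, zpow_natCast] at this
    exact this
  have hupdate : ∀ j : Fin N,
      psiF q (Function.update x μ (x μ * (q⁻¹) ^ 4) μ / z j)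
        = ((1 - (x μ / z j)⁻¹ * q) / (1 - (x μ / z j) * (q ^ 3)⁻¹)) * psiF q (x μ / z j) := by
    intro j
    rw [Function.update_self]
    have hre : x μ * (q⁻¹) ^ 4 / z j = (x μ / z j) * (q⁻¹) ^ 4 := by ring
    rw [hre, psiF_step q hq hq1 _ (div_ne_zero (hx μ) (hz j)) (h1 μ j) (h3 μ j)]
  unfold kerPsi
  rw [hθ x z μ]
  have hsplit : ∀ (y : Fin n → ℂ), (∏ ν : Fin n, ∏ j : Fin N, psiF q (y ν / z j))
      = (∏ ν ∈ Finset.univ.erase μ, ∏ j : Fin N, psiF q (y ν / z j))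
          * ∏ j : Fin N, psiF q (y μ / z j) :=
    fun y => (Finset.prod_erase_mul _ _ (Finset.mem_univ μ)).symm
  rw [hsplit (Function.update x μ (x μ * (q⁻¹) ^ 4)), hsplit x]
  have herase : (∏ ν ∈ Finset.univ.erase μ, ∏ j : Fin N,
        psiF q (Function.update x μ (x μ * (q⁻¹) ^ 4) ν / z j))
      = ∏ ν ∈ Finset.univ.erase μ, ∏ j : Fin N, psiF q (x ν / z j) := by
    apply Finset.prod_congr rfl
    intro ν hν
    rw [Function.update_of_ne (Finset.ne_of_mem_erase hν)]
  rw [herase, Finset.prod_congr rfl (fun j _ => hupdate j), Finset.prod_mul_distrib]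
  have hkey : (∏ j : Fin N, (-(x μ) * q⁻¹ / z j))
        * (∏ j : Fin N, ((1 - (x μ / z j)⁻¹ * q) / (1 - (x μ / z j) * (q ^ 3)⁻¹)))
      = ((q⁻¹) ^ (2 * N))⁻¹ * ∏ j : Fin N, (x μ - z j / q⁻¹) / (x μ - z j / (q⁻¹) ^ 3) := by
    rw [← Finset.prod_mul_distrib]
    have hconst : (((q⁻¹ : ℂ)) ^ (2 * N))⁻¹ = ∏ _j : Fin N, (q ^ 2 : ℂ) := by
      rw [inv_pow, inv_inv, pow_mul]
      simp [Finset.prod_const]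
    rw [hconst, ← Finset.prod_mul_distrib]
    apply Finset.prod_congr rfl
    intro j _
    have hzj := hz j
    have hxμ := hx μ
    have hd2 : x μ - z j * q ^ 3 ≠ 0 := by
      intro h
      apply h3 μ j
      rw [sub_eq_zero] at h
      rw [h]
      field_simp
    have hd2' : x μ - z j / (q⁻¹) ^ 3 ≠ 0 := by
      intro h
      apply hd2
      rw [← h]
      congr 1
      field_simp
    have hd1 : (1 : ℂ) - (x μ / z j) * (q ^ 3)⁻¹ ≠ 0 := by
      intro h
      exact h3 μ j ((mul_inv_eq_one₀ (pow_ne_zero 3 hq)).mp (sub_eq_zero.mp h).symm)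
    rw [div_mul_div_comm, mul_div_assoc' (q ^ 2),
      div_eq_div_iff (mul_ne_zero hzj hd1) hd2']
    field_simp
    ring
  rw [← hkey]
  ring

/-- quasi-periodicity of the kernel `Ψ` in a variable `x_μ`. -/
theorem stmt_1 (q : ℂ) (hq0 : 0 < ‖q‖) (hq1 : ‖q‖ < 1)
    (τ : ℂ) (hτ : τ = q⁻¹) (n N : ℕ) (hn : 0 < n) (hN : 0 < N)
    (θ : (Fin n → ℂ) → (Fin N → ℂ) → ℂ)
    (hθ : ∀ (x : Fin n → ℂ) (z : Fin N → ℂ) (μ : Fin n),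
      θ (Function.update x μ (x μ * τ ^ 4)) z
        = θ x z * ∏ j, (-(x μ) * τ / z j))
    (μ : Fin n) (x : Fin n → ℂ) (z : Fin N → ℂ)
    (hx : ∀ ν, x ν ≠ 0) (hz : ∀ i, z i ≠ 0)
    (hreg : ∀ (ν : Fin n) (i : Fin N) (m : ℤ), Odd m → x ν / z i ≠ q ^ m) :
    kerPsi q θ (Function.update x μ (x μ * τ ^ 4)) z
      = (τ ^ (2 * N))⁻¹ * (∏ j, (x μ - z j / τ) / (x μ - z j / τ ^ 3)) *
          kerPsi q θ x z :=
  stmt_1' q hq0 hq1 τ hτ n N hn hN θ hθ μ x z hx hz hreg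
end

section
/- Let N ≥ 3 and define the polynomial Δ(x|z₁|z₂,…,z_N) = (x − z₁τ) · Σ_{κ=0}^{N−3} (1 − τ^{2(N−2−κ)}) (−τ)^κ x^{N−3−κ} · Σ_{λ=0}^{κ} (−z₁τ²)^λ σ_{κ−λ}(z₂,…,z_N). Then for each j with 2 ≤ j ≤ N, substituting z_j = z₁τ² yields the polynomial identity Δ(x|z₁|z₂,…,z_N)|_{z_j = z₁τ²} = (x − z₁τ) · h^{(N−2)}(x|z₂,…,ẑ_j,…,z_N), where the hat means that the variable z_j is omitted. -/
open Finset Function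

section StmtSixAux
open Polynomial

-- scaled subset sums
lemma esym_scale {m : ℕ} (a : Fin m → ℂ) (t : ℂ) (κ : ℕ) :
    (∑ s ∈ Finset.powersetCard κ (Finset.univ : Finset (Fin m)), ∏ i ∈ s, (a i * t))
      = t ^ κ * esym a κ := by
  rw [esym, Finset.mul_sum]
  refine Finset.sum_congr rfl fun s hs => ?_
  have hc : s.card = κ := (Finset.mem_powersetCard.mp hs).2
  rw [Finset.prod_mul_distrib, Finset.prod_const, hc, mul_comm]

lemma esym_zero {m : ℕ} (a : Fin m → ℂ) : esym a 0 = 1 := by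
  simp [esym]

-- bridge to coefficients
lemma esym_eq_coeff {m : ℕ} (a : Fin m → ℂ) {κ : ℕ} (h : κ ≤ m) :
    esym a κ = (∏ i : Fin m, (X + C (a i))).coeff (m - κ) := by
  rw [Finset.prod_X_add_C_coeff (Finset.univ : Finset (Fin m)) a
      (by simp [Nat.sub_le])]
  simp only [Finset.card_univ, Fintype.card_fin, Nat.sub_sub_self h]
  rfl

-- Vieta sum form
lemma prod_X_sub_C_mul (m : ℕ) (a : Fin m → ℂ) (t : ℂ) :
    (∏ i : Fin m, (X - C (a i * t)))
      = ∑ κ ∈ Finset.range (m + 1), C ((-t) ^ κ * esym a κ) * X ^ (m - κ) := by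
  have h1 : (∏ i : Fin m, (X - C (a i * t)))
      = ((Multiset.map (fun i => a i * -t) (Finset.univ : Finset (Fin m)).val).map
          (fun r => X + C r)).prod := by
    rw [Multiset.map_map]
    rw [Finset.prod_eq_multiset_prod]
    congr 1
    refine Multiset.map_congr rfl fun i _ => ?_
    simp only [Function.comp_apply]
    rw [mul_neg, C_neg, ← sub_eq_add_neg]
  rw [h1, Multiset.prod_X_add_C_eq_sum_esymm]
  have hcard : Multiset.card (Multiset.map (fun i => a i * -t)
      (Finset.univ : Finset (Fin m)).val) = m := by simp
  rw [hcard]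
  refine Finset.sum_congr rfl fun κ _ => ?_
  congr 1
  rw [Finset.esymm_map_val]
  exact congrArg C (esym_scale a (-t) κ)

lemma hN_eq (τ : ℂ) (hτ : τ ≠ 0) (n : ℕ) (c : Fin (n + 1) → ℂ) :
    hN τ c = ∑ κ ∈ Finset.range (n + 1),
      C ((1 - τ ^ (2 * (n + 1 - κ))) * (-τ) ^ κ * esym c κ) * X ^ (n - κ) := by
  have key : (∏ j : Fin (n+1), (X - C (c j * τ)))
      - C (τ ^ (2 * (n+1))) * ∏ j : Fin (n+1), (X - C (c j * τ⁻¹))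
      = X * ∑ κ ∈ Finset.range (n + 1),
          C ((1 - τ ^ (2 * (n + 1 - κ))) * (-τ) ^ κ * esym c κ) * X ^ (n - κ) := by
    rw [prod_X_sub_C_mul, prod_X_sub_C_mul, Finset.mul_sum, ← Finset.sum_sub_distrib]
    rw [Finset.sum_range_succ]
    have hlast : C ((-τ) ^ (n+1) * esym c (n+1)) * X ^ (n + 1 - (n+1))
      - C (τ ^ (2 * (n+1))) * (C ((-τ⁻¹) ^ (n+1) * esym c (n+1)) * X ^ (n + 1 - (n+1))) = 0 := by
      have : (τ ^ (2 * (n+1)) * (-τ⁻¹) ^ (n+1)) = (-τ) ^ (n+1) := by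
        rw [neg_pow, neg_pow, inv_pow, two_mul, pow_add]
        field_simp
        rw [neg_pow]; ring
      rw [← mul_assoc, ← C_mul, ← mul_assoc, this, sub_self]
    rw [hlast, add_zero, Finset.mul_sum]
    refine Finset.sum_congr rfl fun κ hκ => ?_
    have hκn : κ ≤ n := Nat.lt_succ_iff.mp (Finset.mem_range.mp hκ)
    have hco : τ ^ (2 * (n+1)) * (-τ⁻¹) ^ κ = τ ^ (2 * (n + 1 - κ)) * (-τ) ^ κ := by
      rw [neg_pow, neg_pow, inv_pow]
      have h2 : τ ^ (2 * (n + 1 - κ)) * τ ^ κ * τ ^ κ = τ ^ (2 * (n + 1)) := by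
        rw [← pow_add, ← pow_add]; congr 1; omega
      rw [← h2]; field_simp; ring
    have hx : (X : Polynomial ℂ) ^ (n + 1 - κ) = X * X ^ (n - κ) := by
      rw [← pow_succ']
      congr 1; omega
    rw [hx]
    have hC : C ((-τ) ^ κ * esym c κ) - C (τ ^ (2 * (n+1))) * C ((-τ⁻¹) ^ κ * esym c κ)
        = C ((1 - τ ^ (2 * (n + 1 - κ))) * (-τ) ^ κ * esym c κ) := by
      rw [← C_mul, ← C_sub]; congr 1; rw [← mul_assoc, hco]; ring
    rw [← hC]; ring
  rw [hN, key, mul_divByMonic_cancel_left _ monic_X]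

lemma esym_update {m : ℕ} (b : Fin (m + 1) → ℂ) (j : Fin (m + 1)) (v : ℂ)
    {κ : ℕ} (h : κ + 1 ≤ m) :
    esym (Function.update b j v) (κ + 1)
      = esym (fun i => b (j.succAbove i)) (κ + 1) + v * esym (fun i => b (j.succAbove i)) κ := by
  set c : Fin m → ℂ := fun i => b (j.succAbove i) with hc
  have hsplit : (∏ i : Fin (m+1), (X + C (Function.update b j v i)))
      = (X + C v) * ∏ i : Fin m, (X + C (c i)) := by
    rw [Fin.prod_univ_succAbove (fun i => X + C (Function.update b j v i)) j]
    congr 1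
    · rw [Function.update_self]
    · refine Finset.prod_congr rfl fun i _ => ?_
      rw [Function.update_of_ne (Fin.succAbove_ne j i)]
  rw [esym_eq_coeff _ (by omega : κ + 1 ≤ m + 1), hsplit]
  have h1 : m + 1 - (κ + 1) = (m - (κ+1)) + 1 := by omega
  rw [add_mul, coeff_add, coeff_C_mul, h1, coeff_X_mul]
  rw [← esym_eq_coeff c (by omega : κ + 1 ≤ m)]
  have h2 : m - (κ + 1) + 1 = m - κ := by omega
  rw [h2, ← esym_eq_coeff c (by omega : κ ≤ m)]

lemma stmt6_inner_sum {m : ℕ} (b : Fin (m + 1) → ℂ) (j : Fin (m + 1)) (v : ℂ) :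
    ∀ κ : ℕ, κ + 1 ≤ m →
      (∑ lam ∈ Finset.range (κ + 1), (-v) ^ lam * esym (Function.update b j v) (κ - lam))
        = esym (fun i => b (j.succAbove i)) κ := by
  intro κ
  induction κ with
  | zero => intro _; simp [esym_zero]
  | succ κ ih =>
    intro hκ
    rw [Finset.sum_range_succ']
    simp only [Nat.succ_sub_succ]
    have : (∑ i ∈ Finset.range (κ + 1), (-v) ^ (i + 1) * esym (Function.update b j v) (κ - i))
        = -v * ∑ i ∈ Finset.range (κ + 1), (-v) ^ i * esym (Function.update b j v) (κ - i) := by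
      rw [Finset.mul_sum]; refine Finset.sum_congr rfl fun i _ => by ring
    rw [this, ih (by omega), pow_zero, one_mul, Nat.sub_zero,
      esym_update b j v (by omega : κ + 1 ≤ m)]
    ring

end StmtSixAux

/-- the restriction of `Δ(x|z₁|z₂,…,z_N)` at `z_j = z₁τ²`.
Here `N = K + 3` and `b : Fin (K+2) → ℂ` is the tuple `(z₂,…,z_N)`. -/
theorem stmt_6 (q : ℂ) (hq0 : 0 < ‖q‖) (hq1 : ‖q‖ < 1)
    (τ : ℂ) (hτ : τ = q⁻¹) (K : ℕ)
    (x z1 : ℂ) (b : Fin (K + 2) → ℂ) (j : Fin (K + 2)) :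
    Delta1 τ x z1 (Function.update b j (z1 * τ ^ 2))
      = (x - z1 * τ) * (hN τ (fun i : Fin (K + 1) => b (j.succAbove i))).eval x := by
  have hq : q ≠ 0 := by
    intro h; rw [h] at hq0; simp at hq0
  have hτ0 : τ ≠ 0 := hτ ▸ inv_ne_zero hq
  rw [Delta1, hN_eq τ hτ0 K, Polynomial.eval_finset_sum]
  rw [Finset.mul_sum, Finset.mul_sum]
  refine Finset.sum_congr (by norm_num) fun κ hκ => ?_
  have hκK : κ ≤ K := Nat.lt_succ_iff.mp (Finset.mem_range.mp hκ)
  rw [stmt6_inner_sum b j (z1 * τ ^ 2) κ (by omega)]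
  simp only [Polynomial.eval_mul, Polynomial.eval_C, Polynomial.eval_pow, Polynomial.eval_X,
    show K + 2 - 1 - κ = K + 1 - κ from by omega, show K + 2 - 2 - κ = K - κ from by omega]
  ring
end

section
/- For all integers 1 ≤ n < l with N = n + l, the polynomial identity A^{(nl)}_{n+1}(x|z₁,…,zₙ|z_{n+1},…,z_N) = h^{(N)}(x|z₁,…,z_N) holds. -/
open Finset Function

section aux

lemma esym_eq_esymm {m : ℕ} (c : Fin m → ℂ) (κ : ℕ) :
    esym c κ = (Finset.univ.val.map c).esymm κ := by
  rw [Finset.esymm_map_val]; rfl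

lemma esym_scale_s9 {m : ℕ} (t : ℂ) (c : Fin m → ℂ) (κ : ℕ) :
    (Multiset.map (fun i => -(c i * t)) (Finset.univ.val : Multiset (Fin m))).esymm κ
      = (-t)^κ * esym c κ := by
  have h := Multiset.pow_smul_esymm (-t) κ ((Finset.univ.val : Multiset (Fin m)).map c)
  rw [smul_eq_mul] at h
  have hm : Multiset.map (fun i => -(c i * t)) (Finset.univ.val : Multiset (Fin m))
      = Multiset.map (fun y => -t • y) ((Finset.univ.val : Multiset (Fin m)).map c) := by
    rw [Multiset.map_map]
    apply Multiset.map_congr rfl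
    intro i _
    simp [smul_eq_mul]; ring
  rw [esym_eq_esymm, hm, ← h]

lemma prod_linear {m : ℕ} (t x : ℂ) (c : Fin m → ℂ) :
    ∏ j : Fin m, (x - c j * t) = ∑ κ ∈ Finset.range (m+1), (-t)^κ * esym c κ * x^(m-κ) := by
  have h := Multiset.prod_X_add_C_eq_sum_esymm
    ((Finset.univ.val : Multiset (Fin m)).map (fun i => -(c i * t)))
  have h2 := congrArg (Polynomial.eval x) h
  simp only [Multiset.map_map, Multiset.card_map, Polynomial.eval_multiset_prod,
    Polynomial.eval_finset_sum, Polynomial.eval_mul, Polynomial.eval_pow, Polynomial.eval_C,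
    Polynomial.eval_X, Polynomial.eval_add, Function.comp] at h2
  have hcard : Multiset.card (Finset.univ.val : Multiset (Fin m)) = m := by simp
  rw [hcard] at h2
  have hl : ∏ j : Fin m, (x - c j * t)
      = (Multiset.map (fun i => x + -(c i * t))
          (Finset.univ.val : Multiset (Fin m))).prod := by
    rw [Finset.prod]
    apply congrArg
    apply Multiset.map_congr rfl
    intro i _
    ring
  rw [hl, h2]
  exact Finset.sum_congr rfl fun κ _ => by rw [esym_scale_s9]

lemma key_W {m : ℕ} {τ : ℂ} (hτ : τ ≠ 0) (c : Fin m → ℂ) (x : ℂ) :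
    x * ∑ κ ∈ Finset.range m, (1 - τ^(2*(m-κ))) * (-τ)^κ * esym c κ * x^(m-1-κ)
      = ∏ j : Fin m, (x - c j * τ) - τ^(2*m) * ∏ j : Fin m, (x - c j * τ⁻¹) := by
  rw [prod_linear τ x c, prod_linear τ⁻¹ x c, Finset.mul_sum, Finset.mul_sum,
    ← Finset.sum_sub_distrib, Finset.sum_range_succ]
  have hlast : (-τ)^m * esym c m * x^(m-m) - τ^(2*m) * ((-τ⁻¹)^m * esym c m * x^(m-m)) = 0 := by
    have : τ^(2*m) * (-τ⁻¹)^m = (-τ)^m := by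
      rw [neg_pow, neg_pow, inv_pow, two_mul, pow_add]
      field_simp
      rw [neg_pow]
      ring
    have h0 : τ^(2*m) * ((-τ⁻¹)^m * esym c m * x^(m-m)) = (-τ)^m * esym c m * x^(m-m) := by
      rw [← this]; ring
    rw [h0]; ring
  rw [hlast, add_zero]
  apply Finset.sum_congr rfl
  intro κ hκ
  rw [Finset.mem_range] at hκ
  have hx : x * x^(m-1-κ) = x^(m-κ) := by
    rw [← pow_succ']
    congr 1
    omega
  have hcoef : τ^(2*m) * (-τ⁻¹)^κ = (-τ)^κ * τ^(2*(m-κ)) := by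
    rw [neg_pow, neg_pow, inv_pow]
    have h2m : 2*m = κ + (κ + 2*(m-κ)) := by omega
    rw [h2m, pow_add, pow_add]
    field_simp
    ring
  calc x * ((1 - τ^(2*(m-κ))) * (-τ)^κ * esym c κ * x^(m-1-κ))
      = (1 - τ^(2*(m-κ))) * (-τ)^κ * esym c κ * (x * x^(m-1-κ)) := by ring
    _ = (1 - τ^(2*(m-κ))) * (-τ)^κ * esym c κ * x^(m-κ) := by rw [hx]
    _ = (-τ)^κ * esym c κ * x^(m-κ) - ((-τ)^κ * τ^(2*(m-κ))) * esym c κ * x^(m-κ) := by ring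
    _ = (-τ)^κ * esym c κ * x^(m-κ) - τ^(2*m) * ((-τ⁻¹)^κ * esym c κ * x^(m-κ)) := by
        rw [← hcoef]; ring

lemma esym_zero_of_gt {m : ℕ} (c : Fin m → ℂ) {κ : ℕ} (h : m < κ) : esym c κ = 0 := by
  unfold esym
  rw [Finset.powersetCard_eq_empty.2 (by simpa using h)]
  simp

end aux

/-- `A^{(nl)}_{n+1}(x|z₁,…,zₙ|z_{n+1},…,z_N) = h^{(N)}(x|z₁,…,z_N)`. -/
theorem stmt_9 (q : ℂ) (hq0 : 0 < ‖q‖) (hq1 : ‖q‖ < 1)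
    (τ : ℂ) (hτ : τ = q⁻¹) (n l : ℕ) (hn : 1 ≤ n) (hnl : n < l)
    (x : ℂ) (a : Fin n → ℂ) (b : Fin l → ℂ) :
    AP τ (n + 1) x a b = (hN τ (Fin.append a b)).eval x := by
  have hq : q ≠ 0 := by
    intro h; rw [h] at hq0; simp at hq0
  have hτ0 : τ ≠ 0 := by rw [hτ]; exact inv_ne_zero hq
  set N := n + l with hN'
  -- main identity for y ≠ 0
  have main : ∀ y : ℂ, y ≠ 0 → AP τ (n + 1) y a b = (hN τ (Fin.append a b)).eval y := by
    intro y hy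
    apply mul_left_cancel₀ hy
    -- x * f
    have htoNat : ((l : ℤ) - n + ((n+1 : ℕ) : ℤ) - 1).toNat = l := by omega
    have hphi : ∀ κ : ℕ, phiP τ (n+1) κ a b = esym b κ := by
      intro κ
      unfold phiP
      have hz : ∀ β ∈ Finset.Icc (n+1) κ, (∑ α ∈ Finset.Icc (n+1) β,
          (-1 : ℂ) ^ (β - α) * τ ^ (2 * β) * esym b (κ - β) * esym a α * hsym a (β - α)) = 0 := by
        intro β hβ
        apply Finset.sum_eq_zero
        intro α hα
        rw [Finset.mem_Icc] at hα
        rw [esym_zero_of_gt a (show n < α by omega)]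
        ring
      rw [Finset.sum_congr rfl hz]
      simp
    have hf : y * fP τ (n+1) y a b
        = ∏ j : Fin l, (y - b j * τ) - τ^(2*l) * ∏ j : Fin l, (y - b j * τ⁻¹) := by
      unfold fP
      rw [htoNat]
      rw [← key_W hτ0 b y]
      congr 1
      apply Finset.sum_congr rfl
      intro κ hκ
      rw [hphi κ]
    have hg : y * gP τ (n+1) y a
        = ∏ j : Fin n, (y - a j * τ) - τ^(2*n) * ∏ j : Fin n, (y - a j * τ⁻¹) := by
      unfold gP
      simp only [Nat.add_sub_cancel, show n+1-2 = n-1 from by omega]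
      exact key_W hτ0 a y
    -- the h polynomial
    set P : Polynomial ℂ :=
      ((∏ j : Fin N, (Polynomial.X - Polynomial.C (Fin.append a b j * τ)))
        - Polynomial.C (τ ^ (2 * N)) *
          ∏ j : Fin N, (Polynomial.X - Polynomial.C (Fin.append a b j * τ⁻¹))) with hP
    have hprod0 : ∀ t : ℂ, ∏ j : Fin N, ((0:ℂ) - Fin.append a b j * t)
        = ((-1) * t)^N * ∏ j : Fin N, Fin.append a b j := by
      intro t
      rw [show (((-1 : ℂ) * t)^N * ∏ j : Fin N, Fin.append a b j)
          = ∏ j : Fin N, ((-1) * t * Fin.append a b j) by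
        rw [Finset.prod_mul_distrib, Finset.prod_const]
        simp]
      exact Finset.prod_congr rfl fun j _ => by ring
    have hP0 : P.eval 0 = 0 := by
      rw [hP]
      simp only [Polynomial.eval_sub, Polynomial.eval_mul, Polynomial.eval_prod,
        Polynomial.eval_C, Polynomial.eval_X]
      rw [hprod0 τ, hprod0 τ⁻¹]
      have : τ ^ (2*N) * ((-1 : ℂ) * τ⁻¹)^N = ((-1) * τ)^N := by
        rw [mul_pow, mul_pow, inv_pow, two_mul, pow_add]
        field_simp
      rw [show τ ^ (2*N) * (((-1 : ℂ) * τ⁻¹)^N * ∏ j : Fin N, Fin.append a b j)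
          = (τ ^ (2*N) * ((-1 : ℂ) * τ⁻¹)^N) * ∏ j : Fin N, Fin.append a b j by ring, this]
      ring
    have hh : y * (hN τ (Fin.append a b)).eval y = P.eval y := by
      have hdiv := Polynomial.modByMonic_add_div P Polynomial.X
      rw [Polynomial.modByMonic_X] at hdiv
      have := congrArg (Polynomial.eval y) hdiv
      simp only [Polynomial.eval_add, Polynomial.eval_mul, Polynomial.eval_C,
        Polynomial.eval_X, hP0, zero_add] at this
      calc y * (hN τ (Fin.append a b)).eval y = (P /ₘ Polynomial.X).eval y * y := by
            unfold hN; rw [← hP]; ring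
        _ = P.eval y := by rw [← this]; ring
    have hsplit : ∀ t : ℂ, ∏ j : Fin N, (y - Fin.append a b j * t)
        = (∏ j : Fin n, (y - a j * t)) * ∏ j : Fin l, (y - b j * t) := by
      intro t
      rw [Fin.prod_univ_add]
      simp
    have hPy : P.eval y = (∏ j : Fin n, (y - a j * τ)) * (∏ j : Fin l, (y - b j * τ))
        - τ^(2*N) * ((∏ j : Fin n, (y - a j * τ⁻¹)) * ∏ j : Fin l, (y - b j * τ⁻¹)) := by
      rw [hP]
      simp only [Polynomial.eval_sub, Polynomial.eval_mul, Polynomial.eval_prod,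
        Polynomial.eval_C, Polynomial.eval_X]
      rw [hsplit τ, hsplit τ⁻¹]
    have hAP : y * AP τ (n+1) y a b
        = (∏ j : Fin n, (y - a j * τ)) * (y * fP τ (n+1) y a b)
          + τ ^ (2*l) * (∏ i : Fin l, (y - b i * τ⁻¹)) * (y * gP τ (n+1) y a) := by
      unfold AP
      rw [show l - n + (n+1) - 1 = l by omega]
      ring
    rw [hAP, hf, hg, hh, hPy]
    rw [show 2*N = 2*n + 2*l by omega, pow_add]
    ring
  -- extend to all x by continuity
  have hF : Continuous fun y : ℂ => AP τ (n+1) y a b := by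
    unfold AP fP gP
    fun_prop
  have hG : Continuous fun y : ℂ => (hN τ (Fin.append a b)).eval y :=
    Polynomial.continuous _
  have hext := Continuous.ext_on (dense_compl_singleton (0:ℂ)) hF hG
    (fun y hy => main y (Set.mem_compl_singleton_iff.mp hy))
  exact congrFun hext x
end
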